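/- The M×M discrete chirp matrix Ψ with entries Ψ[m',m] = e^{iπ/4}·e^{−iπ(m'−m)²/M} / √M (for m, m' ∈ {0,…,M−1}, M even) is unitary. -/

import Mathlib

open Matrix Complex

private lemma chirp_comb (c c' e1 e2 e3 e4 f1 f2 : ℂ) (hc : c * c = c')
    (he : e1 + e2 + (e3 + e4) = f1 + f2) :
    c * Complex.exp e1 * Complex.exp e2 * (c * Complex.exp e3 * Complex.exp e4)
      = c' * (Complex.exp f1 * Complex.exp f2) := by
  calc c * Complex.exp e1 * Complex.exp e2 * (c * Complex.exp e3 * Complex.exp e4)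
      = c * c * Complex.exp (e1 + e2 + (e3 + e4)) := by
        rw [Complex.exp_add, Complex.exp_add, Complex.exp_add]; ring
    _ = c' * Complex.exp (f1 + f2) := by rw [hc, he]
    _ = c' * (Complex.exp f1 * Complex.exp f2) := by rw [Complex.exp_add]

private lemma chirp_geom_sum_zero (M : ℕ) (hM : 0 < M) (d : ℤ) (hd : ¬ ((M : ℤ) ∣ d)) :
    ∑ k : Fin M, (Complex.exp (2 * Real.pi * d / M * Complex.I)) ^ (k : ℕ) = 0 := by
  set ζ : ℂ := Complex.exp (2 * Real.pi * d / M * Complex.I) with hζ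
  have hMne : (M : ℂ) ≠ 0 := Nat.cast_ne_zero.mpr hM.ne'
  have hζM : ζ ^ M = 1 := by
    rw [hζ, ← Complex.exp_nat_mul]
    have h1 : (M : ℂ) * (2 * Real.pi * d / M * Complex.I) = d * (2 * Real.pi * Complex.I) := by
      field_simp
    rw [h1, Complex.exp_int_mul_two_pi_mul_I]
  have hζ1 : ζ ≠ 1 := by
    intro h
    rw [hζ, Complex.exp_eq_one_iff] at h
    obtain ⟨n, hn⟩ := h
    apply hd
    refine ⟨n, ?_⟩
    have hI : Complex.I ≠ 0 := Complex.I_ne_zero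
    have hπ : (Real.pi : ℂ) ≠ 0 := Complex.ofReal_ne_zero.mpr Real.pi_ne_zero
    have hdc : (d : ℂ) = (M : ℂ) * n := by
      field_simp at hn
      have h2 : (2 : ℂ) * Real.pi * d * Complex.I = 2 * Real.pi * (M * n) * Complex.I := by
        linear_combination (2 * (Real.pi : ℂ) * Complex.I) * hn
      have h2' := mul_right_cancel₀ hI h2
      have h3 : (Real.pi : ℂ) * d = Real.pi * (M * n) := by linear_combination h2' / 2
      exact mul_left_cancel₀ hπ h3
    exact_mod_cast hdc
  have hg := geom_sum_eq hζ1 M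
  rw [Fin.sum_univ_eq_sum_range (fun k => ζ ^ k), hg, hζM, sub_self, zero_div]

/-- The `M × M` discrete chirp matrix with entries
`Ψ[m',m] = (1/√M) e^{iπ/4} e^{−iπ(m'−m)²/M}` (`M` even) is unitary. -/
theorem chirp_matrix_unitary (M : ℕ) (hM : 0 < M) (hMeven : Even M)
    (Ψ : Matrix (Fin M) (Fin M) ℂ)
    (hΨ : ∀ m' m : Fin M, Ψ m' m = (1 / Real.sqrt M) * Complex.exp (Real.pi / 4 * Complex.I)
        * Complex.exp (-(Real.pi * ((m' : ℕ) - (m : ℕ) : ℤ)^2 / M) * Complex.I)) :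
    Ψᴴ * Ψ = 1 := by
  have hMne : (M : ℂ) ≠ 0 := Nat.cast_ne_zero.mpr hM.ne'
  have hss : (1 : ℂ) / (Real.sqrt M : ℝ) * (1 / (Real.sqrt M : ℝ)) = 1 / (M : ℂ) := by
    rw [div_mul_div_comm, one_mul, ← Complex.ofReal_mul,
      Real.mul_self_sqrt (Nat.cast_nonneg M), Complex.ofReal_natCast]
  ext m m'
  rw [Matrix.mul_apply, Matrix.one_apply]
  have e2 : (starRingEnd ℂ) (Complex.exp ((Real.pi : ℂ) / 4 * Complex.I))
      = Complex.exp (-((Real.pi : ℂ) / 4 * Complex.I)) := by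
    rw [← Complex.exp_conj, _root_.map_mul, map_div₀, Complex.conj_ofReal, Complex.conj_I,
      map_ofNat, mul_neg]
  have e3 : ∀ n : ℤ, (starRingEnd ℂ)
      (Complex.exp (-((Real.pi : ℂ) * (n : ℂ)^2 / M) * Complex.I))
      = Complex.exp (((Real.pi : ℂ) * (n : ℂ)^2 / M) * Complex.I) := by
    intro n
    rw [← Complex.exp_conj, _root_.map_mul, map_neg, map_div₀, _root_.map_mul, map_pow,
      Complex.conj_ofReal, map_intCast, Complex.conj_natCast, Complex.conj_I,
      mul_neg, neg_mul, neg_neg]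
  have e1 : (starRingEnd ℂ) ((1 : ℂ) / (Real.sqrt M : ℝ)) = (1 : ℂ) / (Real.sqrt M : ℝ) := by
    rw [map_div₀, _root_.map_one, Complex.conj_ofReal]
  have hterm : ∀ k : Fin M, Ψᴴ m k * Ψ k m' =
      (1 / M : ℂ) * (Complex.exp (-((Real.pi : ℂ) * (((m' : ℤ) - (m : ℤ) : ℤ) : ℂ)
          * (((m : ℤ) : ℂ) + ((m' : ℤ) : ℂ))) / M * Complex.I)
        * (Complex.exp (2 * Real.pi * (((m' : ℤ) - (m : ℤ) : ℤ) : ℂ) / M * Complex.I)) ^ (k : ℕ)) := by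
    intro k
    rw [Matrix.conjTranspose_apply, hΨ k m, hΨ k m', Complex.star_def,
      _root_.map_mul, _root_.map_mul, e1, e2, e3, ← Complex.exp_nat_mul]
    refine chirp_comb _ _ _ _ _ _ _ _ hss ?_
    have hz : (((k : ℤ) - (m : ℤ) : ℤ) : ℂ)^2 - (((k : ℤ) - (m' : ℤ) : ℤ) : ℂ)^2
        = 2 * (k : ℕ) * (((m' : ℤ) - (m : ℤ) : ℤ) : ℂ)
          - (((m' : ℤ) - (m : ℤ) : ℤ) : ℂ) * (((m : ℤ) : ℂ) + ((m' : ℤ) : ℂ)) := by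
      push_cast
      ring
    push_cast
    push_cast at hz
    linear_combination (Real.pi : ℂ) * Complex.I / (M : ℂ) * hz
  rw [Finset.sum_congr rfl (fun k _ => hterm k)]
  rw [← Finset.mul_sum, ← Finset.mul_sum]
  by_cases h : m = m'
  · subst h
    rw [if_pos rfl]
    simp only [sub_self, Int.cast_zero, mul_zero, zero_mul, zero_div, neg_zero,
      Complex.exp_zero, one_pow, one_mul]
    rw [Finset.sum_const, Finset.card_univ, Fintype.card_fin, nsmul_eq_mul, mul_one]
    field_simp
  · rw [if_neg h]
    have hdvd : ¬ ((M : ℤ) ∣ ((m' : ℤ) - (m : ℤ))) := by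
      intro hdv
      have hlt : |((m' : ℤ) - (m : ℤ))| < (M : ℤ) := by
        have h1 := m.isLt
        have h2 := m'.isLt
        rw [abs_lt]
        constructor <;> omega
      have h0 := Int.eq_zero_of_abs_lt_dvd hdv hlt
      exact h (Fin.ext (by omega)).symm
    rw [chirp_geom_sum_zero M hM _ hdvd, mul_zero, mul_zero]
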